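/- Let P = ⟨p₁, …, p_n⟩ and Q = ⟨q₁, …, q_n⟩ be sequences of n points in ℝ², let g > 0 with GED(P, Q) ≤ g, and set Δ = g/√n. For a shift b ∈ [0, Δ]², define X_b as the minimum of |Γ(M)| = 2(n − |M|) over all monotone matchings M between P and Q such that id_{Δ,b}(p_i) = id_{Δ,b}(q_j) for every (i, j) ∈ M. If b is chosen uniformly at random from [0, Δ]², then E[X_b] ≤ 6√n + g. -/

import Mathlib

open MeasureTheory

noncomputable section

/-- Points in the plane with the Euclidean distance. -/
abbrev Pt := EuclideanSpace ℝ (Fin 2)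

/-- The cell of the grid with side length `Δ`, shifted by `b`, containing the point `p`. -/
def gridId (Δ : ℝ) (b : Fin 2 → ℝ) (p : Pt) : ℤ × ℤ :=
  (⌊(p 0 + b 0) / Δ⌋, ⌊(p 1 + b 1) / Δ⌋)

/-- The box `[0, Δ]²` of possible shifts. -/
def shiftBox (Δ : ℝ) : Set (Fin 2 → ℝ) := Set.Icc 0 (fun _ => Δ)

/-- The uniform (normalized Lebesgue) measure on the box `[0, Δ]²`. -/
def unifShift (Δ : ℝ) : Measure (Fin 2 → ℝ) :=
  (volume (shiftBox Δ))⁻¹ • volume.restrict (shiftBox Δ)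

/-- A monotone matching between index sets `Fin n` and `Fin m`: a set of index pairs with
distinct first indices, distinct second indices, such that first indices and second indices
are ordered consistently. -/
structure MMatch (n m : ℕ) where
  pairs : Finset (Fin n × Fin m)
  inj1 : ∀ p ∈ pairs, ∀ q ∈ pairs, p.1 = q.1 → p = q
  inj2 : ∀ p ∈ pairs, ∀ q ∈ pairs, p.2 = q.2 → p = q
  mono : ∀ p ∈ pairs, ∀ q ∈ pairs, (p.1 < q.1 ↔ p.2 < q.2)

/-- The number of gap points `|Γ(M)|`: indices of both sequences left unmatched by `M`. -/
def gapCount {n m : ℕ} (M : MMatch n m) : ℕ :=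
  (n - M.pairs.card) + (m - M.pairs.card)
/-- The cost `δ(M)` (gap penalty 1) of a matching between the first `n` points of `P` and the
first `m` points of `Q`. -/
def cost (n m : ℕ) (P Q : ℕ → Pt) (M : MMatch n m) : ℝ :=
  (∑ p ∈ M.pairs, dist (P p.1) (Q p.2)) + (gapCount M : ℝ)

/-- The geometric edit distance between `⟨P 0, …, P (n-1)⟩` and `⟨Q 0, …, Q (m-1)⟩`:
the minimum cost over all monotone matchings. -/
def GED (n m : ℕ) (P Q : ℕ → Pt) : ℝ :=
  sInf {c | ∃ M : MMatch n m, c = cost n m P Q M}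

/-- `X b`: the minimum number of gap points `|Γ(M)| = 2(n − |M|)` over all monotone matchings
`M` between `P` and `Q` that only match points lying in a common cell of the grid with side
length `Δ` shifted by `b`. -/
def Xmin (n : ℕ) (Δ : ℝ) (P Q : ℕ → Pt) (b : Fin 2 → ℝ) : ℕ :=
  sInf {k | ∃ M : MMatch n n,
    (∀ p ∈ M.pairs, gridId Δ b (P p.1) = gridId Δ b (Q p.2)) ∧ k = gapCount M}

-- 1D lemma
lemma bad_shift_superset_aux (Δ x y : ℝ) (hΔ : 0 < Δ) (hxy : x ≤ y) :
    ∃ U : Set ℝ, MeasurableSet U ∧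
      (∀ t ∈ Set.Icc (0:ℝ) Δ, ⌊(x + t) / Δ⌋ ≠ ⌊(y + t) / Δ⌋ → t ∈ U) ∧
      volume U ≤ ENNReal.ofReal (2 * (y - x)) := by
  by_cases hd : y - x ≤ Δ
  · refine ⟨Set.Ico (((⌊x / Δ⌋ : ℝ) + 1) * Δ - y) (((⌊x / Δ⌋ : ℝ) + 1) * Δ - x) ∪
      Set.Ico (((⌊x / Δ⌋ : ℝ) + 2) * Δ - y) (((⌊x / Δ⌋ : ℝ) + 2) * Δ - x),
      measurableSet_Ico.union measurableSet_Ico, ?_, ?_⟩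
    · rintro t ⟨ht0, htΔ⟩ hne
      have hmono : ⌊(x + t) / Δ⌋ ≤ ⌊(y + t) / Δ⌋ :=
        Int.floor_le_floor ((div_le_div_iff_of_pos_right hΔ).mpr (by linarith))
      have hlt : ⌊(x + t) / Δ⌋ < ⌊(y + t) / Δ⌋ := lt_of_le_of_ne hmono hne
      set k : ℤ := ⌊(y + t) / Δ⌋ with hkdef
      have h1 : (k : ℝ) * Δ ≤ y + t := by
        have h := Int.floor_le ((y + t) / Δ)
        have h' := mul_le_mul_of_nonneg_right h hΔ.le
        rwa [div_mul_cancel₀ _ hΔ.ne'] at h'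
      have h2 : x + t < (k : ℝ) * Δ := by
        have h4 : ((⌊(x + t) / Δ⌋ : ℝ) + 1) ≤ (k : ℝ) := by exact_mod_cast hlt
        have h5 := Int.lt_floor_add_one ((x + t) / Δ)
        have h3 : (x + t) / Δ < (k : ℝ) := by linarith
        have h' := mul_lt_mul_of_pos_right h3 hΔ
        rwa [div_mul_cancel₀ _ hΔ.ne'] at h'
      have hk1 : ⌊x / Δ⌋ < k := by
        apply Int.floor_lt.mpr
        rw [div_lt_iff₀ hΔ]
        linarith
      have hk2 : k ≤ ⌊x / Δ⌋ + 2 := by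
        have h5 := Int.lt_floor_add_one (x / Δ)
        have hxf : x < ((⌊x / Δ⌋ : ℝ) + 1) * Δ := by
          have h' := mul_lt_mul_of_pos_right h5 hΔ
          rwa [div_mul_cancel₀ _ hΔ.ne'] at h'
        have hcast : (k : ℝ) * Δ < ((⌊x / Δ⌋ : ℝ) + 3) * Δ := by nlinarith
        have hklt : (k : ℝ) < (⌊x / Δ⌋ : ℝ) + 3 := lt_of_mul_lt_mul_right hcast hΔ.le
        have : k < ⌊x / Δ⌋ + 3 := by exact_mod_cast hklt
        omega
      have hcases : k = ⌊x / Δ⌋ + 1 ∨ k = ⌊x / Δ⌋ + 2 := by omega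
      have hkr : (k : ℝ) = (⌊x / Δ⌋ : ℝ) + 1 ∨ (k : ℝ) = (⌊x / Δ⌋ : ℝ) + 2 := by
        rcases hcases with h | h
        · left; exact_mod_cast congrArg (Int.cast : ℤ → ℝ) h
        · right; exact_mod_cast congrArg (Int.cast : ℤ → ℝ) h
      rcases hkr with hke | hke
      · left
        rw [hke] at h1 h2
        exact ⟨by linarith, by linarith⟩
      · right
        rw [hke] at h1 h2
        exact ⟨by linarith, by linarith⟩
    · refine le_trans (measure_union_le _ _) ?_
      rw [Real.volume_Ico, Real.volume_Ico]
      have e1 : ((⌊x / Δ⌋ : ℝ) + 1) * Δ - x - (((⌊x / Δ⌋ : ℝ) + 1) * Δ - y) = y - x := by ring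
      have e2 : ((⌊x / Δ⌋ : ℝ) + 2) * Δ - x - (((⌊x / Δ⌋ : ℝ) + 2) * Δ - y) = y - x := by ring
      rw [e1, e2, ← ENNReal.ofReal_add (by linarith) (by linarith)]
      exact ENNReal.ofReal_le_ofReal (by linarith)
  · exact ⟨Set.Icc 0 Δ, measurableSet_Icc, fun t ht _ => ht, by
      rw [Real.volume_Icc]
      exact ENNReal.ofReal_le_ofReal (by push_neg at hd; linarith)⟩

lemma bad_shift_superset (Δ x y : ℝ) (hΔ : 0 < Δ) :
    ∃ U : Set ℝ, MeasurableSet U ∧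
      (∀ t ∈ Set.Icc (0:ℝ) Δ, ⌊(x + t) / Δ⌋ ≠ ⌊(y + t) / Δ⌋ → t ∈ U) ∧
      volume U ≤ ENNReal.ofReal (2 * |x - y|) := by
  rcases le_total x y with h | h
  · obtain ⟨U, h1, h2, h3⟩ := bad_shift_superset_aux Δ x y hΔ h
    refine ⟨U, h1, h2, ?_⟩
    rwa [abs_sub_comm, abs_of_nonneg (by linarith)]
  · obtain ⟨U, h1, h2, h3⟩ := bad_shift_superset_aux Δ y x hΔ h
    refine ⟨U, h1, fun t ht hne => h2 t ht (Ne.symm hne), ?_⟩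
    rwa [abs_of_nonneg (by linarith)]

lemma measurable_gridId (Δ : ℝ) (p : Pt) :
    Measurable (fun b : Fin 2 → ℝ => gridId Δ b p) := by
  unfold gridId
  exact Measurable.prodMk
    ((((measurable_pi_apply (X := fun _ : Fin 2 => ℝ) 0).const_add (p 0)).div_const Δ).floor)
    ((((measurable_pi_apply (X := fun _ : Fin 2 => ℝ) 1).const_add (p 1)).div_const Δ).floor)

lemma measurableSet_bad (Δ : ℝ) (x y : Pt) :
    MeasurableSet {b : Fin 2 → ℝ | gridId Δ b x ≠ gridId Δ b y} := by
  have h := (measurableSet_eq_fun (measurable_gridId Δ x)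
    (measurable_gridId Δ y)).compl
  simpa [Set.compl_setOf] using h

lemma shiftBox_eq_pi (Δ : ℝ) :
    shiftBox Δ = Set.univ.pi (fun _ : Fin 2 => Set.Icc (0:ℝ) Δ) := by
  unfold shiftBox
  rw [← Set.pi_univ_Icc]
  rfl

lemma volume_shiftBox (Δ : ℝ) :
    volume (shiftBox Δ) = ENNReal.ofReal Δ * ENNReal.ofReal Δ := by
  rw [shiftBox_eq_pi, volume_pi_pi]
  simp [Fin.prod_univ_two, Real.volume_Icc, sq]

lemma unifShift_prob (Δ : ℝ) (hΔ : 0 < Δ) : IsProbabilityMeasure (unifShift Δ) := by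
  constructor
  unfold unifShift
  rw [Measure.smul_apply, Measure.restrict_apply MeasurableSet.univ, Set.univ_inter,
    smul_eq_mul]
  rw [ENNReal.inv_mul_cancel]
  · rw [volume_shiftBox]
    simp only [ne_eq, mul_eq_zero, not_or]
    constructor <;> simp [ENNReal.ofReal_eq_zero, not_le, hΔ]
  · rw [volume_shiftBox]
    exact ENNReal.mul_ne_top ENNReal.ofReal_ne_top ENNReal.ofReal_ne_top

lemma unifShift_bad_le (Δ : ℝ) (hΔ : 0 < Δ) (x y : Pt) :
    (unifShift Δ {b | gridId Δ b x ≠ gridId Δ b y}).toReal ≤ 3 * dist x y / Δ := by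
  obtain ⟨U0, hU0m, hU0s, hU0v⟩ := bad_shift_superset Δ (x 0) (y 0) hΔ
  obtain ⟨U1, hU1m, hU1s, hU1v⟩ := bad_shift_superset Δ (x 1) (y 1) hΔ
  set d0 : ℝ := |x 0 - y 0| with hd0def
  set d1 : ℝ := |x 1 - y 1| with hd1def
  have hd0 : 0 ≤ d0 := abs_nonneg _
  have hd1 : 0 ≤ d1 := abs_nonneg _
  set B0 : Set (Fin 2 → ℝ) := {b | ⌊(x 0 + b 0) / Δ⌋ ≠ ⌊(y 0 + b 0) / Δ⌋} with hB0def
  set B1 : Set (Fin 2 → ℝ) := {b | ⌊(x 1 + b 1) / Δ⌋ ≠ ⌊(y 1 + b 1) / Δ⌋} with hB1def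
  -- box membership gives componentwise bounds
  have hboxmem : ∀ b ∈ shiftBox Δ, ∀ i : Fin 2, b i ∈ Set.Icc (0:ℝ) Δ := by
    intro b hb i
    rw [shiftBox_eq_pi] at hb
    exact hb i (Set.mem_univ i)
  have hsub0 : B0 ∩ shiftBox Δ ⊆
      Set.univ.pi (fun j : Fin 2 => if j = 0 then U0 else Set.Icc (0:ℝ) Δ) := by
    rintro b ⟨hb, hbx⟩ j _
    fin_cases j
    · simpa using hU0s (b 0) (hboxmem b hbx 0) hb
    · simpa using hboxmem b hbx 1
  have hsub1 : B1 ∩ shiftBox Δ ⊆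
      Set.univ.pi (fun j : Fin 2 => if j = 1 then U1 else Set.Icc (0:ℝ) Δ) := by
    rintro b ⟨hb, hbx⟩ j _
    fin_cases j
    · simpa using hboxmem b hbx 0
    · simpa using hU1s (b 1) (hboxmem b hbx 1) hb
  have hBsub : {b | gridId Δ b x ≠ gridId Δ b y} ⊆ B0 ∪ B1 := by
    intro b hb
    by_contra hcon
    rw [Set.mem_union] at hcon
    push_neg at hcon
    obtain ⟨h0, h1⟩ := hcon
    apply hb
    simp only [hB0def, Set.mem_setOf_eq, not_not] at h0
    simp only [hB1def, Set.mem_setOf_eq, not_not] at h1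
    simp only [gridId, Prod.mk.injEq]
    exact ⟨h0, h1⟩
  have hvol0 : volume (Set.univ.pi (fun j : Fin 2 => if j = 0 then U0 else Set.Icc (0:ℝ) Δ))
      ≤ ENNReal.ofReal (2 * d0) * ENNReal.ofReal Δ := by
    rw [volume_pi_pi, Fin.prod_univ_two]
    simp only [if_pos rfl, if_neg (show (1 : Fin 2) ≠ 0 by decide), Real.volume_Icc, sub_zero]
    exact mul_le_mul' hU0v le_rfl
  have hvol1 : volume (Set.univ.pi (fun j : Fin 2 => if j = 1 then U1 else Set.Icc (0:ℝ) Δ))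
      ≤ ENNReal.ofReal Δ * ENNReal.ofReal (2 * d1) := by
    rw [volume_pi_pi, Fin.prod_univ_two]
    simp only [if_pos rfl, if_neg (show (0 : Fin 2) ≠ 1 by decide), Real.volume_Icc, sub_zero]
    exact mul_le_mul' le_rfl hU1v
  have hinter : volume ({b | gridId Δ b x ≠ gridId Δ b y} ∩ shiftBox Δ)
      ≤ ENNReal.ofReal ((2 * d0 + 2 * d1) * Δ) := by
    calc volume ({b | gridId Δ b x ≠ gridId Δ b y} ∩ shiftBox Δ)
        ≤ volume ((B0 ∩ shiftBox Δ) ∪ (B1 ∩ shiftBox Δ)) := by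
          apply measure_mono
          rintro b ⟨hb, hbx⟩
          exact (hBsub hb).imp (fun h => ⟨h, hbx⟩) (fun h => ⟨h, hbx⟩)
      _ ≤ volume (B0 ∩ shiftBox Δ) + volume (B1 ∩ shiftBox Δ) := measure_union_le _ _
      _ ≤ ENNReal.ofReal (2 * d0) * ENNReal.ofReal Δ + ENNReal.ofReal Δ * ENNReal.ofReal (2 * d1) :=
          add_le_add (le_trans (measure_mono hsub0) hvol0) (le_trans (measure_mono hsub1) hvol1)
      _ = ENNReal.ofReal ((2 * d0 + 2 * d1) * Δ) := by
          rw [← ENNReal.ofReal_mul (by linarith), ← ENNReal.ofReal_mul (by linarith),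
            ← ENNReal.ofReal_add (by nlinarith) (by nlinarith)]
          ring_nf
  have happ : unifShift Δ {b | gridId Δ b x ≠ gridId Δ b y}
      = (volume (shiftBox Δ))⁻¹ * volume ({b | gridId Δ b x ≠ gridId Δ b y} ∩ shiftBox Δ) := by
    unfold unifShift
    rw [Measure.smul_apply, Measure.restrict_apply (measurableSet_bad Δ x y), smul_eq_mul]
  have hle : unifShift Δ {b | gridId Δ b x ≠ gridId Δ b y}
      ≤ ENNReal.ofReal ((Δ * Δ)⁻¹ * ((2 * d0 + 2 * d1) * Δ)) := by
    have hbox2 : volume (shiftBox Δ) = ENNReal.ofReal (Δ * Δ) := by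
      rw [volume_shiftBox, ENNReal.ofReal_mul hΔ.le]
    rw [happ, hbox2, ← ENNReal.ofReal_inv_of_pos (mul_pos hΔ hΔ),
      ENNReal.ofReal_mul (show (0:ℝ) ≤ (Δ * Δ)⁻¹ by positivity)]
    exact mul_le_mul' le_rfl hinter
  have hdist : dist x y = Real.sqrt (d0 ^ 2 + d1 ^ 2) := by
    rw [EuclideanSpace.dist_eq, Fin.sum_univ_two, Real.dist_eq, Real.dist_eq]
  have hkey : 2 * d0 + 2 * d1 ≤ 3 * dist x y := by
    have hs : dist x y ^ 2 = d0 ^ 2 + d1 ^ 2 := by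
      rw [hdist]; exact Real.sq_sqrt (by positivity)
    nlinarith [dist_nonneg (x := x) (y := y), sq_nonneg (d0 - d1), hd0, hd1]
  apply ENNReal.toReal_le_of_le_ofReal (by positivity)
  refine le_trans hle (ENNReal.ofReal_le_ofReal ?_)
  rw [show (Δ * Δ)⁻¹ * ((2 * d0 + 2 * d1) * Δ) = (2 * d0 + 2 * d1) / Δ by field_simp]
  rw [div_le_div_iff₀ hΔ hΔ]
  nlinarith

lemma MMatch.card_le_left {n m : ℕ} (M : MMatch n m) : M.pairs.card ≤ n := by
  have h := Finset.card_le_card_of_injOn (fun p : Fin n × Fin m => p.1)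
    (fun a _ => Finset.mem_univ a.1)
    (fun p hp q hq h => M.inj1 p (Finset.mem_coe.mp hp) q (Finset.mem_coe.mp hq) h)
  simpa using h

lemma exists_cost_min (n : ℕ) (P Q : ℕ → Pt) :
    ∃ M : MMatch n n, cost n n P Q M = GED n n P Q := by
  classical
  have hfin : {c | ∃ M : MMatch n n, c = cost n n P Q M}.Finite := by
    apply Set.Finite.subset (Set.finite_range
      (fun s : Finset (Fin n × Fin n) =>
        (∑ p ∈ s, dist (P p.1) (Q p.2)) + (((n - s.card) + (n - s.card) : ℕ) : ℝ)))
    rintro c ⟨M, rfl⟩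
    exact ⟨M.pairs, rfl⟩
  have hne : {c | ∃ M : MMatch n n, c = cost n n P Q M}.Nonempty :=
    ⟨cost n n P Q ⟨∅, by simp, by simp, by simp⟩, ⟨_, rfl⟩⟩
  obtain ⟨M, hM⟩ := hne.csInf_mem hfin
  exact ⟨M, hM.symm⟩

/-- If `GED(P, Q) ≤ g` and `Δ = g / √n`, then for a uniformly random shift `b ∈ [0, Δ]²`,
the expected value of `X b` is at most `6√n + g`. -/
theorem expected_Xmin_le (n : ℕ) (P Q : ℕ → Pt) (g : ℝ) (hg : 0 < g)
    (hged : GED n n P Q ≤ g) (Δ : ℝ) (hΔ : Δ = g / Real.sqrt n) :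
    ∫ b, (Xmin n Δ P Q b : ℝ) ∂(unifShift Δ) ≤ 6 * Real.sqrt n + g := by
  classical
  rcases Nat.eq_zero_or_pos n with hn | hn
  · subst hn
    have hΔ0 : Δ = 0 := by simp [hΔ]
    have hbox0 : volume (shiftBox Δ) = 0 := by
      rw [volume_shiftBox, hΔ0]; simp
    have hzero : unifShift Δ = 0 := by
      unfold unifShift
      rw [Measure.restrict_eq_zero.mpr hbox0, smul_zero]
    rw [hzero, integral_zero_measure]
    have h := Real.sqrt_nonneg ((0:ℕ):ℝ)
    linarith
  · have hn' : (0:ℝ) < (n:ℝ) := by exact_mod_cast hn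
    have hsq : 0 < Real.sqrt n := Real.sqrt_pos.mpr hn'
    have hΔpos : 0 < Δ := by rw [hΔ]; positivity
    obtain ⟨M, hMeq⟩ := exists_cost_min n P Q
    have hcost : cost n n P Q M ≤ g := le_of_eq_of_le hMeq hged
    have hsumnn : 0 ≤ ∑ p ∈ M.pairs, dist (P p.1) (Q p.2) :=
      Finset.sum_nonneg fun _ _ => dist_nonneg
    have hgapnn : (0:ℝ) ≤ (gapCount M : ℝ) := Nat.cast_nonneg _
    have hsum : ∑ p ∈ M.pairs, dist (P p.1) (Q p.2) ≤ g := by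
      unfold cost at hcost; linarith
    have hgap : (gapCount M : ℝ) ≤ g := by unfold cost at hcost; linarith
    haveI := unifShift_prob Δ hΔpos
    set Bad : Fin n × Fin n → Set (Fin 2 → ℝ) :=
      fun p => {b | gridId Δ b (P p.1) ≠ gridId Δ b (Q p.2)} with hBad
    have hBadMeas : ∀ p : Fin n × Fin n, MeasurableSet (Bad p) := by
      intro p; rw [hBad]; exact measurableSet_bad Δ (P p.1) (Q p.2)
    set F : (Fin 2 → ℝ) → ℝ :=
      fun b => (gapCount M : ℝ) + 2 * ∑ p ∈ M.pairs, (Bad p).indicator (fun _ => (1:ℝ)) b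
      with hF
    have hIndInt : ∀ p ∈ M.pairs,
        Integrable ((Bad p).indicator (fun _ => (1:ℝ))) (unifShift Δ) :=
      fun p _ => (integrable_const 1).indicator (hBadMeas p)
    have hFInt : Integrable F (unifShift Δ) := by
      apply Integrable.add (integrable_const _)
      exact (integrable_finset_sum _ hIndInt).const_mul 2
    have hpt : ∀ b, (Xmin n Δ P Q b : ℝ) ≤ F b := by
      intro b
      set Mb : MMatch n n :=
        ⟨M.pairs.filter (fun p => gridId Δ b (P p.1) = gridId Δ b (Q p.2)),
         fun p hp q hq h => M.inj1 p (Finset.mem_of_mem_filter p hp) q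
           (Finset.mem_of_mem_filter q hq) h,
         fun p hp q hq h => M.inj2 p (Finset.mem_of_mem_filter p hp) q
           (Finset.mem_of_mem_filter q hq) h,
         fun p hp q hq => M.mono p (Finset.mem_of_mem_filter p hp) q
           (Finset.mem_of_mem_filter q hq)⟩ with hMb
      have hXle : Xmin n Δ P Q b ≤ gapCount Mb :=
        Nat.sInf_le ⟨Mb, fun p hp => (Finset.mem_filter.mp hp).2, rfl⟩
      have hcards : Mb.pairs.card
          + (M.pairs.filter (fun p => ¬ gridId Δ b (P p.1) = gridId Δ b (Q p.2))).card
          = M.pairs.card := by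
        simpa using Finset.card_filter_add_card_filter_not
          (s := M.pairs) (p := fun p => gridId Δ b (P p.1) = gridId Δ b (Q p.2))
      have hcn := M.card_le_left
      have hgapeq : gapCount Mb = gapCount M
          + 2 * (M.pairs.filter (fun p => ¬ gridId Δ b (P p.1) = gridId Δ b (Q p.2))).card := by
        unfold gapCount; omega
      have hind : ∀ p ∈ M.pairs, (Bad p).indicator (fun _ => (1:ℝ)) b
          = if ¬ gridId Δ b (P p.1) = gridId Δ b (Q p.2) then (1:ℝ) else 0 := by
        intro p _
        by_cases h : gridId Δ b (P p.1) = gridId Δ b (Q p.2)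
        · rw [Set.indicator_of_notMem (by rw [hBad]; exact not_not.mpr h),
            if_neg (not_not.mpr h)]
        · rw [Set.indicator_of_mem (by rw [hBad]; exact h), if_pos h]
      have hsumind : ∑ p ∈ M.pairs, (Bad p).indicator (fun _ => (1:ℝ)) b
          = ((M.pairs.filter (fun p => ¬ gridId Δ b (P p.1) = gridId Δ b (Q p.2))).card : ℝ) := by
        rw [Finset.sum_congr rfl hind, Finset.sum_boole]
      calc (Xmin n Δ P Q b : ℝ) ≤ (gapCount Mb : ℝ) := by exact_mod_cast hXle
        _ = (gapCount M : ℝ)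
            + 2 * ((M.pairs.filter (fun p => ¬ gridId Δ b (P p.1) = gridId Δ b (Q p.2))).card : ℝ)
            := by rw [hgapeq]; push_cast; ring
        _ = F b := by simp only [hF]; rw [hsumind]
    have hmain : ∫ b, (Xmin n Δ P Q b : ℝ) ∂(unifShift Δ) ≤ ∫ b, F b ∂(unifShift Δ) :=
      integral_mono_of_nonneg (ae_of_all _ fun b => Nat.cast_nonneg _) hFInt (ae_of_all _ hpt)
    have h1 : ∀ p ∈ M.pairs, ∫ b, (Bad p).indicator (fun _ => (1:ℝ)) b ∂(unifShift Δ)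
        = ((unifShift Δ) (Bad p)).toReal := by
      intro p _
      rw [integral_indicator_const (1:ℝ) (hBadMeas p)]
      simp [measureReal_def]
    have hFint_eq : ∫ b, F b ∂(unifShift Δ)
        = (gapCount M : ℝ) + 2 * ∑ p ∈ M.pairs, ((unifShift Δ) (Bad p)).toReal := by
      simp only [hF]
      rw [integral_add (integrable_const _) ((integrable_finset_sum _ hIndInt).const_mul 2),
        integral_const, integral_const_mul, integral_finset_sum _ hIndInt,
        Finset.sum_congr rfl h1]
      simp
    have hbound : ∑ p ∈ M.pairs, ((unifShift Δ) (Bad p)).toReal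
        ≤ ∑ p ∈ M.pairs, 3 * dist (P p.1) (Q p.2) / Δ := by
      apply Finset.sum_le_sum
      intro p _
      simpa [hBad] using unifShift_bad_le Δ hΔpos (P p.1) (Q p.2)
    have hsum3 : ∑ p ∈ M.pairs, 3 * dist (P p.1) (Q p.2) / Δ
        = (3/Δ) * ∑ p ∈ M.pairs, dist (P p.1) (Q p.2) := by
      rw [Finset.mul_sum]; exact Finset.sum_congr rfl fun p _ => by ring
    have hgΔ : g / Δ = Real.sqrt n := by
      rw [hΔ, div_div_eq_mul_div, mul_comm, mul_div_assoc, div_self hg.ne', mul_one]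
    have h2 : 2 * ∑ p ∈ M.pairs, ((unifShift Δ) (Bad p)).toReal ≤ 6 * Real.sqrt n := by
      have h3 : ∑ p ∈ M.pairs, ((unifShift Δ) (Bad p)).toReal ≤ (3/Δ) * g := by
        refine le_trans hbound ?_
        rw [hsum3]
        exact mul_le_mul_of_nonneg_left hsum (by positivity)
      have h4 : (3/Δ) * g = 3 * Real.sqrt n := by
        rw [← hgΔ]; ring
      linarith
    rw [hFint_eq] at hmain
    linarith
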